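/- Let F be a finite group, N a normal subgroup of F, and let ψ, χ be complex irreducible characters of F such that N ⊆ ker ψ and the restriction of χ to N is irreducible. Then the product character ψχ is an irreducible character of F. -/

import Mathlib

open CategoryTheory MonoidalCategory

namespace Stmt7Aux

variable {k G : Type} [Field k] [Monoid G]

/-- Schur: every equivariant endomorphism of a simple `FDRep` is scalar. -/
lemma schur_scalar [IsAlgClosed k] (V : FDRep k G) [Simple V]
    (u : V →ₗ[k] V) (hu : ∀ g : G, u ∘ₗ V.ρ g = V.ρ g ∘ₗ u) :
    ∃ c : k, u = c • LinearMap.id := by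
  let f : V ⟶ V := ⟨FGModuleCat.ofHom u, fun g => by ext x; exact LinearMap.congr_fun (hu g) x⟩
  obtain ⟨c, hc⟩ := endomorphism_simple_eq_smul_id k f
  refine ⟨c, ?_⟩
  have : (c • 𝟙 V).hom.hom.hom = f.hom.hom.hom := by rw [hc]
  exact this.symm

/-- A simple `FDRep` is a nontrivial module. -/
lemma nontrivial_of_simple (V : FDRep k G) [Simple V] : Nontrivial V := by
  by_contra h
  rw [not_nontrivial_iff_subsingleton] at h
  have : (𝟙 V : V ⟶ V) = 0 := by
    apply Action.Hom.ext
    apply FGModuleCat.hom_ext; apply LinearMap.ext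
    intro x
    exact @Subsingleton.elim _ h _ _
  exact id_nonzero V this

/-- Restriction of a representation to an invariant submodule. -/
noncomputable def subRep (V : FDRep k G) (p : Submodule k V) (hp : ∀ g : G, ∀ x ∈ p, V.ρ g x ∈ p) :
    Representation k G p where
  toFun g := (V.ρ g).restrict (hp g)
  map_one' := by ext x; simp
  map_mul' g h := by ext x; simp

end Stmt7Aux

section Mono
variable {k G : Type} [Field k] [Monoid G]

lemma mono_injective {V W : FDRep k G} (f : V ⟶ W) [Mono f] :
    Function.Injective f.hom.hom.hom := by
  rw [← LinearMap.ker_eq_bot]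
  set p : Submodule k V := LinearMap.ker f.hom.hom.hom with hp
  have hinv : ∀ g : G, ∀ x ∈ p, V.ρ g x ∈ p := by
    intro g x hx
    have h1 : f.hom.hom.hom (V.ρ g x) = W.ρ g (f.hom.hom.hom x) :=
      congrArg (fun φ => φ.hom.hom x) (f.comm g)
    have hx0 : f.hom.hom.hom x = 0 := hx
    show f.hom.hom.hom (V.ρ g x) = 0
    rw [h1, hx0, map_zero]
  let Z : FDRep k G := FDRep.of (Stmt7Aux.subRep V p hinv)
  let ι : Z ⟶ V := ⟨FGModuleCat.ofHom p.subtype, fun g => by ext; rfl⟩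
  have hιf : ι ≫ f = 0 ≫ f := by
    apply Action.Hom.ext
    apply FGModuleCat.hom_ext; apply LinearMap.ext
    intro x
    show f.hom.hom.hom x.val = f.hom.hom.hom ((0 : Z →ₗ[k] V) x)
    have : f.hom.hom.hom x.val = 0 := x.2
    simp [this]
  have hι0 : ι = 0 := Mono.right_cancellation _ _ hιf
  ext x
  have : x ∈ p ↔ x ∈ (⊥ : Submodule k V) := by
    constructor
    · intro hx
      have := congrArg (fun (h : Z ⟶ V) => h.hom.hom.hom ⟨x, hx⟩) hι0
      have h2 : x = (0 : Z ⟶ V).hom.hom.hom ⟨x, hx⟩ := this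
      simpa using h2
    · intro hx
      simp at hx
      simp [hx, hp]
  exact this

end Mono


section Maschke
variable {G : Type} [Group G] [Fintype G]

lemma exists_retraction {V W : FDRep ℂ G} (f : V ⟶ W)
    (hinj : Function.Injective f.hom.hom.hom) :
    ∃ r : W ⟶ V, f ≫ r = 𝟙 V := by
  obtain ⟨φ, hφ⟩ := f.hom.hom.hom.exists_leftInverse_of_injective
    (LinearMap.ker_eq_bot.mpr hinj)
  set c : ℂ := (Fintype.card G : ℂ)⁻¹ with hc
  set r₀ : W →ₗ[ℂ] V := c • ∑ g : G, (V.ρ g) ∘ₗ φ ∘ₗ (W.ρ g⁻¹) with hr₀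
  have hVmul : ∀ (a b : G) (y : V), V.ρ a (V.ρ b y) = V.ρ (a * b) y := by
    intro a b y; rw [map_mul]; rfl
  have hWmul : ∀ (a b : G) (y : W), W.ρ a (W.ρ b y) = W.ρ (a * b) y := by
    intro a b y; rw [map_mul]; rfl
  have happ : ∀ x : W, r₀ x = c • ∑ g : G, V.ρ g (φ (W.ρ g⁻¹ x)) := by
    intro x
    rw [hr₀]
    simp only [LinearMap.smul_apply, LinearMap.coe_sum, Finset.sum_apply,
      LinearMap.coe_comp, Function.comp_apply]
  have hcomm : ∀ h : G, r₀ ∘ₗ W.ρ h = V.ρ h ∘ₗ r₀ := by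
    intro h
    apply LinearMap.ext
    intro x
    show r₀ (W.ρ h x) = V.ρ h (r₀ x)
    rw [happ, happ, map_smul, map_sum]
    congr 1
    refine (Fintype.sum_bijective (fun g => h * g) (Group.mulLeft_bijective h) _ _ ?_).symm
    intro g
    rw [hVmul, hWmul]
    congr 2
    group
  have hsplit : ∀ y : V, r₀ (f.hom.hom.hom y) = y := by
    intro y
    rw [happ]
    have hterm : ∀ g : G, V.ρ g (φ (W.ρ g⁻¹ (f.hom.hom.hom y))) = y := by
      intro g
      have h1 : W.ρ g⁻¹ (f.hom.hom.hom y) = f.hom.hom.hom (V.ρ g⁻¹ y) :=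
        (congrArg (fun φ => φ.hom.hom y) (f.comm g⁻¹)).symm
      rw [h1]
      have h2 : φ (f.hom.hom.hom (V.ρ g⁻¹ y)) = V.ρ g⁻¹ y :=
        LinearMap.congr_fun hφ (V.ρ g⁻¹ y)
      rw [h2, hVmul]
      simp
    simp only [hterm, Finset.sum_const, Finset.card_univ]
    have hcard : (Fintype.card G : ℂ) ≠ 0 := Nat.cast_ne_zero.mpr Fintype.card_ne_zero
    rw [hc, ← Nat.cast_smul_eq_nsmul ℂ, smul_smul, inv_mul_cancel₀ hcard, one_smul]
  refine ⟨⟨FGModuleCat.ofHom r₀, fun h => by ext x; exact LinearMap.congr_fun (hcomm h) x⟩, ?_⟩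
  apply Action.Hom.ext
  apply FGModuleCat.hom_ext; apply LinearMap.ext
  intro y
  exact hsplit y

end Maschke

section SimpleCrit
variable {G : Type} [Group G] [Fintype G]

omit [Fintype G] in
lemma id_ne_zero_of_nontrivial (X : FDRep ℂ G) (h : Nontrivial X) : (𝟙 X : X ⟶ X) ≠ 0 := by
  intro h0
  obtain ⟨x, hx⟩ := exists_ne (0 : X)
  apply hx
  have := congrArg (fun (T : X ⟶ X) => T.hom.hom.hom x) h0
  simpa using this

lemma simple_of_scalar_end (X : FDRep ℂ G) (hnt : Nontrivial X)
    (hS : ∀ T : X ⟶ X, ∃ c : ℂ, T = c • 𝟙 X) : Simple X := by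
  have hid : (𝟙 X : X ⟶ X) ≠ 0 := id_ne_zero_of_nontrivial X hnt
  constructor
  intro Y f hmono
  constructor
  · intro hiso h0
    apply hid
    rw [← IsIso.inv_hom_id f]
    have : inv f ≫ f = inv f ≫ 0 := congrArg (fun t => inv f ≫ t) h0
    rw [this, Limits.comp_zero]
  · intro hf0
    obtain ⟨r, hr⟩ := exists_retraction f (mono_injective f)
    obtain ⟨c, hc⟩ := hS (r ≫ f)
    have hidem : (r ≫ f) ≫ (r ≫ f) = r ≫ f := by
      rw [Category.assoc, ← Category.assoc f r f, hr, Category.id_comp]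
    rw [hc] at hidem
    have hc2 : (c * c - c) • (𝟙 X : X ⟶ X) = 0 := by
      rw [sub_smul, mul_smul]
      rw [Linear.smul_comp, Linear.comp_smul, Category.comp_id] at hidem
      rw [hidem]
      simp
    have hcc : c * c - c = 0 := by
      by_contra hne
      apply hid
      have := congrArg (fun T => (c * c - c)⁻¹ • T) hc2
      simpa [smul_smul, inv_mul_cancel₀ hne] using this
    have hfactor : c * (c - 1) = 0 := by ring_nf; linear_combination hcc
    rcases mul_eq_zero.mp hfactor with h0 | h1
    · exfalso
      apply hf0
      have hrf0 : r ≫ f = 0 := by rw [hc, h0, zero_smul]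
      calc f = (f ≫ r) ≫ f := by rw [hr, Category.id_comp]
        _ = f ≫ (r ≫ f) := by rw [Category.assoc]
        _ = 0 := by rw [hrf0, Limits.comp_zero]
    · have hrf : r ≫ f = 𝟙 X := by rw [hc, sub_eq_zero.mp h1, one_smul]
      exact ⟨⟨r, hr, hrf⟩⟩

end SimpleCrit

section TensorEnd

open TensorProduct

lemma tmul_right_cancel {V W : Type} [AddCommGroup V] [Module ℂ V] [AddCommGroup W] [Module ℂ W]
    (u v : V) (y : W) (hy : y ≠ 0) (h : u ⊗ₜ[ℂ] y = v ⊗ₜ[ℂ] y) : u = v := by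
  have hφ : ¬ (∀ φ : Module.Dual ℂ W, φ y = 0) := by
    rw [Module.forall_dual_apply_eq_zero_iff]; exact hy
  push_neg at hφ
  obtain ⟨φ, hφ⟩ := hφ
  let L : TensorProduct ℂ V W →ₗ[ℂ] V :=
    (TensorProduct.rid ℂ V).toLinearMap ∘ₗ TensorProduct.map LinearMap.id φ
  have hL : ∀ (a : V) (x : W), L (a ⊗ₜ x) = φ x • a := by
    intro a x
    simp [L]
  have := congrArg L h
  rw [hL, hL] at this
  have h2 := congrArg (fun z => (φ y)⁻¹ • z) this
  simpa [smul_smul, inv_mul_cancel₀ hφ] using h2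

lemma tensor_end_scalar {F : Type} [Group F] (N : Subgroup F)
    (ψ χ : FDRep ℂ F) [Simple ψ] [Simple χ]
    (hker : ∀ n : F, n ∈ N → ψ.ρ n = 1)
    [hres : Simple (FDRep.of (χ.ρ.comp N.subtype))]
    (T : (ψ ⊗ χ) ⟶ (ψ ⊗ χ)) : ∃ c : ℂ, T = c • 𝟙 (ψ ⊗ χ) := by
  let t : TensorProduct ℂ ψ χ →ₗ[ℂ] TensorProduct ℂ ψ χ := T.hom.hom.hom
  have hcommt : ∀ g : F, t ∘ₗ ((ψ ⊗ χ : FDRep ℂ F).ρ g) = ((ψ ⊗ χ : FDRep ℂ F).ρ g) ∘ₗ t := fun g => LinearMap.ext fun z => congrArg (fun φ => φ.hom.hom z) (T.comm g)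
  -- basis of ψ
  let b := Module.finBasis ℂ ψ
  -- projections
  let π : Fin (Module.finrank ℂ ψ) → (TensorProduct ℂ ψ χ →ₗ[ℂ] χ) := fun i =>
    (TensorProduct.lid ℂ χ).toLinearMap ∘ₗ TensorProduct.map (b.coord i) LinearMap.id
  have hπ : ∀ i (a : ψ) (x : χ), π i (a ⊗ₜ x) = b.coord i a • x := by
    intro i a x
    simp [π]
  have hdecomp : ∀ z : TensorProduct ℂ ψ χ, (∑ i, b i ⊗ₜ[ℂ] π i z) = z := by
    intro z
    induction z using TensorProduct.induction_on with
    | zero => simp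
    | tmul a x =>
      simp only [hπ]
      rw [← Finset.sum_congr rfl (fun i _ => (TensorProduct.smul_tmul (b.coord i a) (b i) x))]
      rw [← TensorProduct.sum_tmul]
      congr 1
      simpa [Module.Basis.coord_apply] using b.sum_repr a
    | add z w hz hw =>
      simp only [map_add, TensorProduct.tmul_add, Finset.sum_add_distrib, hz, hw]
  -- the blocks of t
  let Yres : FDRep ℂ N := FDRep.of (χ.ρ.comp N.subtype)
  let tb : Fin (Module.finrank ℂ ψ) → Fin (Module.finrank ℂ ψ) → (χ →ₗ[ℂ] χ) := fun i j =>
    π i ∘ₗ t ∘ₗ (TensorProduct.mk ℂ ψ χ (b j))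
  have hρtensor : ∀ (g : F) (a : ψ) (x : χ), (ψ ⊗ χ : FDRep ℂ F).ρ g (a ⊗ₜ x) = ψ.ρ g a ⊗ₜ χ.ρ g x :=
    fun g a x => rfl
  have htb : ∀ i j, ∃ c : ℂ, tb i j = c • LinearMap.id := by
    intro i j
    refine Stmt7Aux.schur_scalar Yres (tb i j) ?_
    intro n
    apply LinearMap.ext
    intro x
    show tb i j (χ.ρ (n : F) x) = χ.ρ (n : F) (tb i j x)
    have h1 : (b j : ψ) ⊗ₜ[ℂ] (χ.ρ (n : F) x) = (ψ ⊗ χ : FDRep ℂ F).ρ (n : F) ((b j : ψ) ⊗ₜ x) := by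
      rw [hρtensor, hker n n.2]
      rfl
    have h2 : t ((ψ ⊗ χ : FDRep ℂ F).ρ (n : F) ((b j : ψ) ⊗ₜ x)) =
        (ψ ⊗ χ : FDRep ℂ F).ρ (n : F) (t ((b j : ψ) ⊗ₜ x)) := LinearMap.congr_fun (hcommt (n : F)) _
    have h3 : ∀ w : TensorProduct ℂ ψ χ, π i ((ψ ⊗ χ : FDRep ℂ F).ρ (n : F) w) = χ.ρ (n : F) (π i w) := by
      intro w
      induction w using TensorProduct.induction_on with
      | zero => simp
      | tmul a x =>
        rw [hρtensor, hπ, hπ, hker n n.2]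
        simp
      | add z w hz hw => simp only [map_add, hz, hw]
    show π i (t ((b j : ψ) ⊗ₜ (χ.ρ (n : F) x))) = χ.ρ (n : F) (π i (t ((b j : ψ) ⊗ₜ x)))
    rw [h1, h2, h3]
  choose c hc using fun p : Fin (Module.finrank ℂ ψ) × Fin (Module.finrank ℂ ψ) => htb p.1 p.2
  -- build s
  let s : ψ →ₗ[ℂ] ψ := b.constr ℂ (fun j => ∑ i, c (i, j) • b i)
  have hbasis : ∀ j (x : χ), t ((b j : ψ) ⊗ₜ x) = s (b j) ⊗ₜ x := by
    intro j x
    have h0 : t ((b j : ψ) ⊗ₜ x) = ∑ i, (b i : ψ) ⊗ₜ[ℂ] (π i (t ((b j : ψ) ⊗ₜ x))) :=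
      (hdecomp _).symm
    rw [h0]
    have h1 : ∀ i, π i (t ((b j : ψ) ⊗ₜ x)) = c (i, j) • x := by
      intro i
      have := LinearMap.congr_fun (hc (i, j)) x
      simpa [tb] using this
    simp only [h1]
    rw [← Finset.sum_congr rfl (fun i _ => (TensorProduct.smul_tmul (c (i, j)) (b i) x))]
    rw [← TensorProduct.sum_tmul]
    congr 1
    simp [s, Module.Basis.constr_basis]
  have key : ∀ (a : ψ) (x : χ), t (a ⊗ₜ x) = s a ⊗ₜ x := by
    intro a x
    calc t (a ⊗ₜ x) = t ((∑ j, b.repr a j • b j) ⊗ₜ x) := by rw [b.sum_repr a]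
      _ = ∑ j, b.repr a j • t ((b j : ψ) ⊗ₜ x) := by
          rw [TensorProduct.sum_tmul, map_sum]
          refine Finset.sum_congr rfl (fun j _ => ?_)
          rw [← TensorProduct.smul_tmul', map_smul]
      _ = ∑ j, b.repr a j • ((s (b j) : ψ) ⊗ₜ[ℂ] x) := by simp only [hbasis]
      _ = (∑ j, b.repr a j • s (b j)) ⊗ₜ x := by
          rw [TensorProduct.sum_tmul]
          refine Finset.sum_congr rfl (fun j _ => ?_)
          rw [TensorProduct.smul_tmul']
      _ = s a ⊗ₜ x := by
          congr 1
          conv_rhs => rw [← b.sum_repr a]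
          rw [map_sum]
          simp only [map_smul]
  -- s is equivariant
  have hnt : Nontrivial χ := Stmt7Aux.nontrivial_of_simple χ
  obtain ⟨x₀, hx₀⟩ := exists_ne (0 : χ)
  have hcomm_s : ∀ g : F, s ∘ₗ ψ.ρ g = ψ.ρ g ∘ₗ s := by
    intro g
    apply LinearMap.ext
    intro a
    have hy : χ.ρ g x₀ ≠ 0 := by
      intro h
      apply hx₀
      have hx : χ.ρ g⁻¹ (χ.ρ g x₀) = x₀ := by
        rw [← Module.End.mul_apply, ← map_mul, inv_mul_cancel, map_one, Module.End.one_apply]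
      rw [← hx, h, map_zero]
    have h1 : t ((ψ ⊗ χ : FDRep ℂ F).ρ g (a ⊗ₜ x₀)) = (ψ ⊗ χ : FDRep ℂ F).ρ g (t (a ⊗ₜ x₀)) :=
      LinearMap.congr_fun (hcommt g) _
    rw [hρtensor, key, key, hρtensor] at h1
    exact tmul_right_cancel _ _ _ hy h1
  obtain ⟨cψ, hcψ⟩ := Stmt7Aux.schur_scalar ψ s hcomm_s
  refine ⟨cψ, ?_⟩
  apply Action.Hom.ext
  apply FGModuleCat.hom_ext; apply LinearMap.ext
  intro z
  show t z = cψ • z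
  induction z using TensorProduct.induction_on with
  | zero => simp
  | tmul a x =>
    rw [key, hcψ]
    simp only [LinearMap.smul_apply, LinearMap.id_apply]
    exact (TensorProduct.smul_tmul' _ _ _).symm
  | add z w hz hw => simp only [map_add, hz, hw, smul_add]

end TensorEnd

/-- (Consequence of Gallagher's theorem.)  Let `F` be a finite group, `N ⊴ F`, and let
`ψ, χ` be irreducible complex representations of `F` such that `N ⊆ ker ψ` and the
restriction of `χ` to `N` is irreducible.  Then the tensor product `ψ ⊗ χ`
(whose character is the product of the characters) is irreducible. -/
theorem stmt7 (F : Type) [Group F] [Finite F] (N : Subgroup F) (hN : N.Normal)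
    (ψ χ : FDRep ℂ F) (hψ : Simple ψ) (hχ : Simple χ)
    (hker : ∀ n : F, n ∈ N → ψ.ρ n = 1)
    (hres : Simple (FDRep.of (χ.ρ.comp N.subtype))) :
    Simple (ψ ⊗ χ) := by
  have : Fintype F := Fintype.ofFinite F
  have h1 : Nontrivial ψ := Stmt7Aux.nontrivial_of_simple ψ
  have h2 : Nontrivial χ := Stmt7Aux.nontrivial_of_simple χ
  have hpos : 0 < Module.finrank ℂ (TensorProduct ℂ ψ χ) := by
    rw [Module.finrank_tensorProduct]
    exact Nat.mul_pos Module.finrank_pos Module.finrank_pos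
  have hnt : Nontrivial (TensorProduct ℂ ψ χ) := Module.nontrivial_of_finrank_pos hpos
  exact simple_of_scalar_end (ψ ⊗ χ) hnt (fun T => tensor_end_scalar N ψ χ hker T)
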